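/- Let P, Q ∈ ℂ[x] with deg P = n, deg Q = m, and let R(y) := res_x(Q(x), y − P(x)) be the resultant with respect to x, a polynomial in ℂ[y]. Then |R|_1 ≤ (|P|_1 + 1)^m · |Q|_1^n, where |·|_1 denotes the sum of absolute values of coefficients. -/

import Mathlib

open Polynomial

/-- The 1-seminorm of a complex polynomial: sum of absolute values of its
coefficients. -/
noncomputable def pnorm1 (P : Polynomial ℂ) : ℝ :=
  ∑ k ∈ P.support, ‖P.coeff k‖

lemma pnorm1_eq_sum_range {P : Polynomial ℂ} {N : ℕ} (h : P.natDegree < N) :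
    pnorm1 P = ∑ k ∈ Finset.range N, ‖P.coeff k‖ := by
  refine Finset.sum_subset (P.supp_subset_range h) ?_
  intro k _ hk
  simp [Polynomial.notMem_support_iff.mp hk]

lemma pnorm1_nonneg (P : Polynomial ℂ) : 0 ≤ pnorm1 P :=
  Finset.sum_nonneg fun _ _ => norm_nonneg _

/-- The polynomial with coefficients the absolute values of those of `P`. -/
noncomputable def pabs (P : Polynomial ℂ) : Polynomial ℝ :=
  ∑ k ∈ P.support, Polynomial.C (‖P.coeff k‖) * Polynomial.X ^ k

lemma pabs_coeff (P : Polynomial ℂ) (k : ℕ) :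
    (pabs P).coeff k = ‖P.coeff k‖ := by
  rw [pabs, Polynomial.finset_sum_coeff]
  simp only [Polynomial.coeff_C_mul, Polynomial.coeff_X_pow, mul_ite, mul_one, mul_zero]
  rw [Finset.sum_ite_eq P.support k (fun i => ‖P.coeff i‖)]
  by_cases h : k ∈ P.support
  · simp [h]
  · simp [h, Polynomial.notMem_support_iff.mp h]

lemma pabs_natDegree_le (P : Polynomial ℂ) : (pabs P).natDegree ≤ P.natDegree := by
  refine Polynomial.natDegree_le_iff_coeff_eq_zero.mpr fun m hm => ?_
  rw [pabs_coeff, Polynomial.coeff_eq_zero_of_natDegree_lt hm, norm_zero]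

lemma eval_one_pabs (P : Polynomial ℂ) : (pabs P).eval 1 = pnorm1 P := by
  rw [Polynomial.eval_eq_sum_range' (n := P.natDegree + 1)
    (lt_of_le_of_lt (pabs_natDegree_le P) (Nat.lt_succ_self _)),
    pnorm1_eq_sum_range (Nat.lt_succ_self _)]
  simp [pabs_coeff]

lemma pabs_coeff_nonneg (P : Polynomial ℂ) (k : ℕ) : 0 ≤ (pabs P).coeff k := by
  rw [pabs_coeff]; exact norm_nonneg _

lemma pnorm1_mul_le (P Q : Polynomial ℂ) : pnorm1 (P * Q) ≤ pnorm1 P * pnorm1 Q := by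
  set A := pabs P
  set B := pabs Q
  have hN : (P * Q).natDegree < (P * Q).natDegree + (A * B).natDegree + 1 := by omega
  have hN' : (A * B).natDegree < (P * Q).natDegree + (A * B).natDegree + 1 := by omega
  have key : pnorm1 (P * Q) ≤ (A * B).eval 1 := by
    rw [pnorm1_eq_sum_range hN, Polynomial.eval_eq_sum_range' hN' 1]
    simp only [one_pow, mul_one]
    refine Finset.sum_le_sum fun k _ => ?_
    rw [Polynomial.coeff_mul, Polynomial.coeff_mul]
    refine le_trans (norm_sum_le _ _) (le_of_eq ?_)
    refine Finset.sum_congr rfl fun x _ => ?_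
    rw [norm_mul, pabs_coeff, pabs_coeff]
  calc pnorm1 (P * Q) ≤ (A * B).eval 1 := key
    _ = pnorm1 P * pnorm1 Q := by rw [Polynomial.eval_mul, eval_one_pabs, eval_one_pabs]

lemma pnorm1_C (c : ℂ) : pnorm1 (Polynomial.C c) = ‖c‖ := by
  rw [pnorm1_eq_sum_range (N := 1) (by simp [Polynomial.natDegree_C])]
  simp

lemma pnorm1_one : pnorm1 1 = 1 := by
  have := pnorm1_C 1
  simpa using this

lemma pnorm1_X_sub_C (a : ℂ) :
    pnorm1 (Polynomial.X - Polynomial.C a) = 1 + ‖a‖ := by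
  rw [pnorm1_eq_sum_range (N := 2) (by rw [Polynomial.natDegree_X_sub_C]; omega)]
  rw [Finset.sum_range_succ, Finset.sum_range_one]
  simp [Polynomial.coeff_X_zero, Polynomial.coeff_X_one, add_comm]

lemma pnorm1_multiset_prod_le (s : Multiset (Polynomial ℂ)) :
    pnorm1 s.prod ≤ (s.map pnorm1).prod := by
  induction s using Multiset.induction_on with
  | empty => simp [pnorm1_one]
  | cons a s ih =>
    simp only [Multiset.prod_cons, Multiset.map_cons]
    calc pnorm1 (a * s.prod) ≤ pnorm1 a * pnorm1 s.prod := pnorm1_mul_le _ _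
      _ ≤ pnorm1 a * (s.map pnorm1).prod :=
        mul_le_mul_of_nonneg_left ih (pnorm1_nonneg a)

lemma multiset_prod_map_le {α : Type*} (s : Multiset α) (f g : α → ℝ)
    (h0 : ∀ a ∈ s, 0 ≤ f a) (h : ∀ a ∈ s, f a ≤ g a) :
    (s.map f).prod ≤ (s.map g).prod := by
  induction s using Multiset.induction_on with
  | empty => simp
  | cons a s ih =>
    simp only [Multiset.map_cons, Multiset.prod_cons]
    have hfa : 0 ≤ f a := h0 a (Multiset.mem_cons_self a s)
    have hprodf : 0 ≤ (s.map f).prod := by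
      refine Multiset.prod_nonneg fun x hx => ?_
      obtain ⟨y, hy, rfl⟩ := Multiset.mem_map.mp hx
      exact h0 y (Multiset.mem_cons_of_mem hy)
    exact mul_le_mul (h a (Multiset.mem_cons_self a s))
      (ih (fun x hx => h0 x (Multiset.mem_cons_of_mem hx))
          (fun x hx => h x (Multiset.mem_cons_of_mem hx)))
      hprodf (le_trans hfa (h a (Multiset.mem_cons_self a s)))

lemma abs_eval_le_pnorm1 {z : ℂ} (hz : ‖z‖ ≤ 1) (P : Polynomial ℂ) :
    ‖P.eval z‖ ≤ pnorm1 P := by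
  rw [Polynomial.eval_eq_sum_range, pnorm1_eq_sum_range (Nat.lt_succ_self _)]
  refine le_trans (norm_sum_le _ _) (Finset.sum_le_sum fun i _ => ?_)
  rw [norm_mul, norm_pow]
  calc ‖P.coeff i‖ * ‖z‖ ^ i
      ≤ ‖P.coeff i‖ * 1 := by
        exact mul_le_mul_of_nonneg_left
          (pow_le_one₀ (norm_nonneg _) hz) (norm_nonneg _)
    _ = ‖P.coeff i‖ := mul_one _

lemma abs_eval_le_pnorm1_mul (μ : ℂ) (P : Polynomial ℂ) :
    ‖P.eval μ‖ ≤ pnorm1 P * max 1 (‖μ‖) ^ P.natDegree := by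
  set M := max 1 (‖μ‖) with hM
  have hM1 : (1 : ℝ) ≤ M := le_max_left _ _
  rw [Polynomial.eval_eq_sum_range, pnorm1_eq_sum_range (Nat.lt_succ_self _),
    Finset.sum_mul]
  refine le_trans (norm_sum_le _ _) (Finset.sum_le_sum fun i hi => ?_)
  rw [norm_mul, norm_pow]
  have hle : ‖μ‖ ^ i ≤ M ^ P.natDegree := by
    calc ‖μ‖ ^ i ≤ M ^ i :=
          pow_le_pow_left₀ (norm_nonneg _) (le_max_right _ _) i
      _ ≤ M ^ P.natDegree :=
          pow_le_pow_right₀ hM1 (Nat.lt_succ_iff.mp (Finset.mem_range.mp hi))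
  exact mul_le_mul_of_nonneg_left hle (norm_nonneg _)

/-- Landau / Mahler-type bound: `|lc Q| ∏ max(1,|μ|) ≤ ‖Q‖₁`, via the maximum
modulus principle. -/
lemma mahler_le_pnorm1 (Q : Polynomial ℂ) (hQ : Q ≠ 0)
    (hs : Q.Splits) :
    ‖Q.leadingCoeff‖ *
      (Q.roots.map fun μ => max 1 (‖μ‖)).prod ≤ pnorm1 Q := by
  set T := Q.roots with hT
  set g : ℂ → ℂ → ℂ := fun μ z =>
    if 1 ≤ ‖μ‖ then z - μ else 1 - (starRingEnd ℂ) μ * z with hg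
  set f : ℂ → ℂ := fun z => Q.leadingCoeff * (T.map (fun μ => g μ z)).prod with hf
  have hdiffaux : ∀ s : Multiset ℂ,
      Differentiable ℂ (fun z => (s.map (fun μ => g μ z)).prod) := by
    intro s
    induction s using Multiset.induction_on with
    | empty => simpa using differentiable_const (1 : ℂ)
    | cons a s ih =>
      have : (fun z => ((Multiset.map (fun μ => g μ z) (a ::ₘ s)).prod))
          = fun z => g a z * (s.map (fun μ => g μ z)).prod := by
        funext z; rw [Multiset.map_cons, Multiset.prod_cons]
      rw [this]
      refine Differentiable.mul ?_ ih
      by_cases h : 1 ≤ ‖a‖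
      · simp only [hg, if_pos h]
        exact (differentiable_id.sub_const a)
      · simp only [hg, if_neg h]
        exact (differentiable_const (1:ℂ)).sub ((differentiable_const _).mul differentiable_id)
  have hdiff : Differentiable ℂ f := (differentiable_const _).mul (hdiffaux T)
  have hQfac : Q = Polynomial.C Q.leadingCoeff *
      (T.map fun μ => Polynomial.X - Polynomial.C μ).prod :=
    hs.eq_prod_roots
  have hevalQ : ∀ z : ℂ, Q.eval z =
      Q.leadingCoeff * (T.map fun μ => z - μ).prod := by
    intro z
    conv_lhs => rw [hQfac]
    rw [Polynomial.eval_mul, Polynomial.eval_C, Polynomial.eval_multiset_prod,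
      Multiset.map_map]
    congr 1
    refine congrArg Multiset.prod (Multiset.map_congr rfl fun μ _ => ?_)
    simp
  have habs_prod : ∀ (s : Multiset ℂ) (h : ℂ → ℂ),
      ‖(s.map h).prod‖ = (s.map fun μ => ‖h μ‖).prod := by
    intro s h
    induction s using Multiset.induction_on with
    | empty => simp
    | cons a s ih => simp [ih, norm_mul]
  have hsphere : ∀ z : ℂ, ‖z‖ = 1 →
      ‖f z‖ = ‖Q.eval z‖ := by
    intro z hz
    rw [hf, hevalQ z, norm_mul, norm_mul, habs_prod, habs_prod]
    congr 1
    refine congrArg Multiset.prod (Multiset.map_congr rfl fun μ _ => ?_)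
    by_cases h : 1 ≤ ‖μ‖
    · simp [hg, if_pos h]
    · simp only [hg, if_neg h]
      have hzz : z * (starRingEnd ℂ) z = 1 := by
        rw [Complex.mul_conj]
        norm_cast
        rw [Complex.normSq_eq_norm_sq, hz]; norm_num
      have : (1 : ℂ) - (starRingEnd ℂ) μ * z = ((starRingEnd ℂ) z - (starRingEnd ℂ) μ) * z := by
        rw [sub_mul, mul_comm ((starRingEnd ℂ) z) z, hzz, mul_comm ((starRingEnd ℂ) μ) z]
      have hc : (starRingEnd ℂ) z - (starRingEnd ℂ) μ = (starRingEnd ℂ) (z - μ) :=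
        (map_sub (starRingEnd ℂ) z μ).symm
      rw [this, norm_mul, hz, mul_one, hc, Complex.norm_conj]
  have hmax : ‖f 0‖ ≤ pnorm1 Q := by
    have hb : Bornology.IsBounded (Metric.ball (0:ℂ) 1) := Metric.isBounded_ball
    have hfr : ∀ z ∈ frontier (Metric.ball (0:ℂ) 1), ‖f z‖ ≤ pnorm1 Q := by
      intro z hz
      rw [frontier_ball (0:ℂ) one_ne_zero, Metric.mem_sphere,
        dist_zero_right] at hz
      rw [hsphere z hz]
      exact abs_eval_le_pnorm1 (le_of_eq hz) Q
    have h0 : (0:ℂ) ∈ closure (Metric.ball (0:ℂ) 1) :=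
      subset_closure (Metric.mem_ball_self one_pos)
    have := Complex.norm_le_of_forall_mem_frontier_norm_le hb
      hdiff.diffContOnCl hfr h0
    exact this
  have hf0 : ‖f 0‖ =
      ‖Q.leadingCoeff‖ * (T.map fun μ => max 1 (‖μ‖)).prod := by
    rw [hf, norm_mul, habs_prod]
    congr 1
    refine congrArg Multiset.prod (Multiset.map_congr rfl fun μ _ => ?_)
    by_cases h : 1 ≤ ‖μ‖
    · simp [hg, if_pos h, max_eq_right h]
    · simp [hg, if_neg h, max_eq_left (le_of_not_ge h)]
  rwa [hf0] at hmax

theorem stmt_12 (P Q : Polynomial ℂ) (hP : P ≠ 0) (hQ : Q ≠ 0)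
    (hQsplit : Q.Splits)
    (R : Polynomial ℂ)
    (hR : R = Polynomial.C (Q.leadingCoeff ^ P.natDegree) *
      (Q.roots.map fun μ => (Polynomial.X : Polynomial ℂ) - Polynomial.C (P.eval μ)).prod) :
    pnorm1 R ≤ (pnorm1 P + 1) ^ Q.natDegree * pnorm1 Q ^ P.natDegree := by
  set n := P.natDegree
  set m := Q.natDegree
  set T := Q.roots with hT
  set b := Q.leadingCoeff with hb
  have hcard : Multiset.card T = m := Polynomial.splits_iff_card_roots.mp hQsplit
  have habs_b : (0:ℝ) ≤ ‖b‖ ^ n := pow_nonneg (norm_nonneg _) n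
  -- Step 1: pnorm1 R ≤ |b|^n * ∏ (1 + |P(μ)|)
  have step1 : pnorm1 R ≤ ‖b‖ ^ n *
      (T.map fun μ => 1 + ‖P.eval μ‖).prod := by
    rw [hR]
    calc pnorm1 (Polynomial.C (b ^ n) *
          (T.map fun μ => (Polynomial.X : Polynomial ℂ) - Polynomial.C (P.eval μ)).prod)
        ≤ pnorm1 (Polynomial.C (b ^ n)) *
          pnorm1 (T.map fun μ => (Polynomial.X : Polynomial ℂ) - Polynomial.C (P.eval μ)).prod :=
          pnorm1_mul_le _ _
      _ = ‖b‖ ^ n *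
          pnorm1 (T.map fun μ => (Polynomial.X : Polynomial ℂ) - Polynomial.C (P.eval μ)).prod := by
          rw [pnorm1_C, norm_pow]
      _ ≤ ‖b‖ ^ n *
          ((T.map fun μ => (Polynomial.X : Polynomial ℂ) - Polynomial.C (P.eval μ)).map pnorm1).prod :=
          mul_le_mul_of_nonneg_left (pnorm1_multiset_prod_le _) habs_b
      _ = ‖b‖ ^ n * (T.map fun μ => 1 + ‖P.eval μ‖).prod := by
          rw [Multiset.map_map]
          congr 1
          exact congrArg Multiset.prod (Multiset.map_congr rfl fun μ _ => by
            simp [pnorm1_X_sub_C])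
  -- Step 2: pointwise bound inside the product
  have step2 : (T.map fun μ => 1 + ‖P.eval μ‖).prod ≤
      (T.map fun μ => (pnorm1 P + 1) * max 1 (‖μ‖) ^ n).prod := by
    refine multiset_prod_map_le T _ _ (fun μ _ => by positivity) fun μ _ => ?_
    have h1 : ‖P.eval μ‖ ≤ pnorm1 P * max 1 (‖μ‖) ^ n :=
      abs_eval_le_pnorm1_mul μ P
    have h2 : (1:ℝ) ≤ max 1 (‖μ‖) ^ n :=
      one_le_pow₀ (le_max_left _ _)
    nlinarith [pnorm1_nonneg P]
  -- Step 3: factor the product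
  have step3 : (T.map fun μ => (pnorm1 P + 1) * max 1 (‖μ‖) ^ n).prod =
      (pnorm1 P + 1) ^ m * ((T.map fun μ => max 1 (‖μ‖)).prod) ^ n := by
    rw [Multiset.prod_map_mul]
    congr 1
    · rw [Multiset.map_const', Multiset.prod_replicate, hcard]
    · exact Multiset.prod_map_pow
  have hMprod_nonneg : (0:ℝ) ≤ (T.map fun μ => max 1 (‖μ‖)).prod := by
    refine Multiset.prod_nonneg fun x hx => ?_
    obtain ⟨y, _, rfl⟩ := Multiset.mem_map.mp hx
    exact le_trans zero_le_one (le_max_left _ _)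
  have mahler := mahler_le_pnorm1 Q hQ hQsplit
  have hfinal : ‖b‖ ^ n * ((pnorm1 P + 1) ^ m *
      ((T.map fun μ => max 1 (‖μ‖)).prod) ^ n) ≤
      (pnorm1 P + 1) ^ m * pnorm1 Q ^ n := by
    have key : (‖b‖ * (T.map fun μ => max 1 (‖μ‖)).prod) ^ n ≤
        pnorm1 Q ^ n :=
      pow_le_pow_left₀ (mul_nonneg (norm_nonneg _) hMprod_nonneg) mahler n
    rw [mul_pow] at key
    have hP1 : (0:ℝ) ≤ (pnorm1 P + 1) ^ m :=
      pow_nonneg (by linarith [pnorm1_nonneg P]) m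
    calc ‖b‖ ^ n * ((pnorm1 P + 1) ^ m *
          ((T.map fun μ => max 1 (‖μ‖)).prod) ^ n)
        = (pnorm1 P + 1) ^ m * (‖b‖ ^ n *
          ((T.map fun μ => max 1 (‖μ‖)).prod) ^ n) := by ring
      _ ≤ (pnorm1 P + 1) ^ m * pnorm1 Q ^ n :=
          mul_le_mul_of_nonneg_left key hP1
  calc pnorm1 R ≤ ‖b‖ ^ n *
        (T.map fun μ => 1 + ‖P.eval μ‖).prod := step1
    _ ≤ ‖b‖ ^ n *
        (T.map fun μ => (pnorm1 P + 1) * max 1 (‖μ‖) ^ n).prod :=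
        mul_le_mul_of_nonneg_left step2 habs_b
    _ = ‖b‖ ^ n * ((pnorm1 P + 1) ^ m *
        ((T.map fun μ => max 1 (‖μ‖)).prod) ^ n) := by rw [step3]
    _ ≤ (pnorm1 P + 1) ^ m * pnorm1 Q ^ n := hfinal
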